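/- Suppose α > N and diam Ω < e^(1/(N−α)). Under the reflection setup, assume Ω_λ contains a ball B with positive radius and that there is δ > 0 with |x_λ − y| ≥ δ for all y ∈ B, where x ∈ Σ_λ with x₁ < λ. Then for the logarithmic Riesz kernel, the difference quotient satisfies (u(x_λ) − u(x))/(2(λ − x₁)) ≤ −C for a constant C > 0 depending only on B, δ, diam Ω, α, N (uniformly as x₁ → λ). -/

import Mathlib

open MeasureTheory

/-- Reflection of `x` across the hyperplane `{z : z 0 = l}`. -/
noncomputable def reflH {N : ℕ} [NeZero N] (l : ℝ) (x : EuclideanSpace ℝ (Fin N)) :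
    EuclideanSpace ℝ (Fin N) :=
  WithLp.toLp 2 (Function.update x.ofLp 0 (2 * l - x 0))

/-- `Σ_λ = {x ∈ Ω : x₁ < λ}`. -/
def sigmaL {N : ℕ} [NeZero N] (Ω : Set (EuclideanSpace ℝ (Fin N))) (l : ℝ) :
    Set (EuclideanSpace ℝ (Fin N)) :=
  {x ∈ Ω | x 0 < l}

/-- `Ω_λ = Ω \ closure (Σ_λ ∪ Σ'_λ)`. -/
noncomputable def omegaL {N : ℕ} [NeZero N] (Ω : Set (EuclideanSpace ℝ (Fin N))) (l : ℝ) :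
    Set (EuclideanSpace ℝ (Fin N)) :=
  Ω \ closure (sigmaL Ω l ∪ reflH l '' sigmaL Ω l)

private lemma incr_lemma {β D δ₀ : ℝ} (hβ : 0 < β) (hD : D < Real.exp (-(1 / β)))
    (hδ₀ : 0 < δ₀) :
    ∃ m > 0, ∀ a b : ℝ, δ₀ ≤ a → a ≤ b → b ≤ D →
      m * (b - a) ≤ (b ^ β * Real.log (1 / b) - a ^ β * Real.log (1 / a)) := by
  rcases le_or_gt D 0 with hD0 | hD0
  · exact ⟨1, one_pos, fun a b ha hab hbD =>
      absurd (hδ₀.trans_le (ha.trans (hab.trans hbD))) (not_lt.2 hD0)⟩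
  set κ := -(β * Real.log D + 1) with hκdef
  have hlogD : Real.log D < -(1 / β) := (Real.log_lt_iff_lt_exp hD0).2 hD
  have hκ : 0 < κ := by
    have h1 : β * Real.log D < β * (-(1 / β)) := (mul_lt_mul_iff_right₀ hβ).2 hlogD
    have h2 : β * (-(1 / β)) = -1 := by field_simp
    rw [hκdef]; nlinarith
  set m := κ * min (δ₀ ^ (β - 1)) (D ^ (β - 1)) with hmdef
  have hmin : 0 < min (δ₀ ^ (β - 1)) (D ^ (β - 1)) :=
    lt_min (Real.rpow_pos_of_pos hδ₀ _) (Real.rpow_pos_of_pos hD0 _)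
  refine ⟨m, mul_pos hκ hmin, ?_⟩
  intro a b ha hab hbD
  rcases eq_or_lt_of_le hab with rfl | hab'
  · simp
  have ha0 : 0 < a := hδ₀.trans_le ha
  have hderiv : ∀ s : ℝ, 0 < s →
      HasDerivAt (fun t : ℝ => t ^ β * Real.log (1 / t))
        (s ^ (β - 1) * (-(β * Real.log s + 1))) s := by
    intro s hs
    have h1 : HasDerivAt (fun t : ℝ => t ^ β) (β * s ^ (β - 1)) s :=
      Real.hasDerivAt_rpow_const (Or.inl hs.ne')
    have h2 : HasDerivAt (fun t : ℝ => Real.log (1 / t)) (-s⁻¹) s := by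
      have h2' := (Real.hasDerivAt_log hs.ne').neg
      have heq : (fun t : ℝ => Real.log (1 / t)) = fun t => -Real.log t := by
        funext t; rw [one_div, Real.log_inv]
      rw [heq]; exact h2'
    have h3 := h1.mul h2
    convert h3 using 1
    case e'_4 => rfl
    case e'_5 => rfl
    case e'_8 => rfl
    have hsb : s ^ β * s⁻¹ = s ^ (β - 1) := by
      rw [Real.rpow_sub_one hs.ne', div_eq_mul_inv]
    rw [one_div, Real.log_inv]
    nlinarith [hsb]
  have hcont : ContinuousOn (fun t : ℝ => t ^ β * Real.log (1 / t)) (Set.Icc a b) :=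
    fun s hs => ((hderiv s (lt_of_lt_of_le ha0 hs.1)).continuousAt).continuousWithinAt
  obtain ⟨ξ, hξ, hslope⟩ := exists_hasDerivAt_eq_slope
    (fun t : ℝ => t ^ β * Real.log (1 / t))
    (fun s => s ^ (β - 1) * (-(β * Real.log s + 1))) hab' hcont
    (fun s hs => hderiv s (ha0.trans hs.1))
  have hξ0 : 0 < ξ := ha0.trans hξ.1
  have hξD : ξ ≤ D := hξ.2.le.trans hbD
  rw [eq_div_iff (sub_ne_zero.2 hab'.ne')] at hslope
  have hk : κ ≤ -(β * Real.log ξ + 1) := by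
    have hl : Real.log ξ ≤ Real.log D := Real.log_le_log hξ0 hξD
    have := mul_le_mul_of_nonneg_left hl hβ.le
    rw [hκdef]; linarith
  have hx : min (δ₀ ^ (β - 1)) (D ^ (β - 1)) ≤ ξ ^ (β - 1) := by
    rcases le_or_gt 0 (β - 1) with h1 | h1
    · exact (min_le_left _ _).trans (Real.rpow_le_rpow hδ₀.le (ha.trans hξ.1.le) h1)
    · exact (min_le_right _ _).trans (Real.rpow_le_rpow_of_nonpos hξ0 hξD h1.le)
  have hm : m ≤ ξ ^ (β - 1) * (-(β * Real.log ξ + 1)) := by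
    rw [hmdef, mul_comm (ξ ^ (β - 1))]
    exact mul_le_mul hk hx hmin.le (hκ.le.trans hk)
  calc m * (b - a) ≤ (ξ ^ (β - 1) * (-(β * Real.log ξ + 1))) * (b - a) :=
        mul_le_mul_of_nonneg_right hm (by linarith)
    _ = _ := hslope

private lemma kernel_continuous {β : ℝ} (hβ : 0 < β) {N : ℕ} [NeZero N]
    (x : EuclideanSpace ℝ (Fin N)) :
    Continuous (fun y : EuclideanSpace ℝ (Fin N) => ‖x - y‖ ^ β * Real.log (1 / ‖x - y‖)) := by
  have hcO : ContinuousOn (fun s : ℝ => s ^ β * Real.log (1 / s)) (Set.Ici 0) := by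
    intro s hs
    rcases eq_or_lt_of_le (Set.mem_Ici.1 hs) with h0 | h0
    · -- s = 0
      have hIci : Set.Ici (0:ℝ) = insert 0 (Set.Ioi 0) := by
        rw [Set.Ioi_insert]
      unfold ContinuousWithinAt
      rw [← h0]
      have hval : (0:ℝ) ^ β * Real.log (1 / (0:ℝ)) = 0 := by
        rw [Real.zero_rpow hβ.ne']; ring
      rw [show ((fun s : ℝ => s ^ β * Real.log (1 / s)) 0) = 0 from hval, hIci, nhdsWithin_insert]
      refine Filter.Tendsto.sup ?_ ?_
      · have := tendsto_pure_nhds (fun s : ℝ => s ^ β * Real.log (1 / s)) 0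
        rwa [hval] at this
      · have heq : (fun s : ℝ => s ^ β * Real.log (1 / s))
            = fun s => -(Real.log s * s ^ β) := by
          funext t; rw [one_div, Real.log_inv]; ring
        rw [heq]
        have := (tendsto_log_mul_rpow_nhdsGT_zero hβ).neg
        rwa [neg_zero] at this
    · exact (ContinuousAt.continuousWithinAt
        (((Real.continuousAt_rpow_const s β (Or.inl h0.ne')).mul
          ((Real.continuousAt_log (one_div_ne_zero h0.ne')).comp
            (continuousAt_const.div continuousAt_id h0.ne')))))
  exact hcO.comp_continuous ((continuous_const.sub continuous_id).norm)
    (fun y => Set.mem_Ici.2 (norm_nonneg _))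

private lemma kernel_integrableOn {N : ℕ} [NeZero N] {Ω : Set (EuclideanSpace ℝ (Fin N))}
    (hΩb : Bornology.IsBounded Ω) {β : ℝ} (hβ : 0 < β) (x : EuclideanSpace ℝ (Fin N)) :
    IntegrableOn (fun y => ‖x - y‖ ^ β * Real.log (1 / ‖x - y‖)) Ω := by
  have hcomp : IsCompact (closure Ω) := hΩb.isCompact_closure
  have h2 : IntegrableOn (fun y => ‖x - y‖ ^ β * Real.log (1 / ‖x - y‖)) (closure Ω) volume :=
    ((kernel_continuous hβ x).continuousOn (s := closure Ω)).integrableOn_compact hcomp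
  exact h2.mono_set subset_closure

private lemma reflH_reflH {N : ℕ} [NeZero N] (l : ℝ) (x : EuclideanSpace ℝ (Fin N)) :
    reflH l (reflH l x) = x := by
  ext i
  rcases eq_or_ne i 0 with h | h
  · subst h; simp [reflH]
  · simp [reflH, Function.update_of_ne h]

private lemma reflH_apply_zero {N : ℕ} [NeZero N] (l : ℝ) (x : EuclideanSpace ℝ (Fin N)) :
    reflH l x 0 = 2 * l - x 0 :=
  by simp [reflH]

private lemma reflH_apply_ne {N : ℕ} [NeZero N] (l : ℝ) (x : EuclideanSpace ℝ (Fin N))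
    {i : Fin N} (hi : i ≠ 0) : reflH l x i = x i :=
  Function.update_of_ne hi _ _

private lemma reflH_norm_sub {N : ℕ} [NeZero N] (l : ℝ) (x y : EuclideanSpace ℝ (Fin N)) :
    ‖reflH l x - reflH l y‖ = ‖x - y‖ := by
  rw [EuclideanSpace.norm_eq, EuclideanSpace.norm_eq]
  congr 1
  refine Finset.sum_congr rfl fun i _ => ?_
  rcases eq_or_ne i 0 with h | h
  · subst h
    rw [PiLp.sub_apply, PiLp.sub_apply, reflH_apply_zero, reflH_apply_zero,
      Real.norm_eq_abs, Real.norm_eq_abs, show 2*l - x 0 - (2*l - y 0) = -(x 0 - y 0) by ring,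
      abs_neg]
  · rw [PiLp.sub_apply, PiLp.sub_apply, reflH_apply_ne l x h, reflH_apply_ne l y h]

private lemma reflH_sq_identity {N : ℕ} [NeZero N] (l : ℝ) (x y : EuclideanSpace ℝ (Fin N)) :
    ‖x - y‖ ^ 2 - ‖reflH l x - y‖ ^ 2 = 4 * (l - x 0) * (y 0 - l) := by
  have hx2 : ∀ z : EuclideanSpace ℝ (Fin N), ‖z - y‖ ^ 2 = ∑ i, ‖(z - y) i‖ ^ 2 := by
    intro z
    rw [EuclideanSpace.norm_eq, Real.sq_sqrt (Finset.sum_nonneg fun i _ => sq_nonneg _)]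
  rw [hx2, hx2]
  rw [← Finset.add_sum_erase _ _ (Finset.mem_univ (0 : Fin N)),
    ← Finset.add_sum_erase _ _ (Finset.mem_univ (0 : Fin N))]
  have hsum : ∑ i ∈ Finset.univ.erase (0 : Fin N), ‖(reflH l x - y) i‖ ^ 2
      = ∑ i ∈ Finset.univ.erase (0 : Fin N), ‖(x - y) i‖ ^ 2 := by
    refine Finset.sum_congr rfl fun i hi => ?_
    rw [PiLp.sub_apply, PiLp.sub_apply, reflH_apply_ne l x (Finset.ne_of_mem_erase hi)]
  rw [hsum, PiLp.sub_apply, PiLp.sub_apply, reflH_apply_zero,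
    Real.norm_eq_abs, Real.norm_eq_abs, sq_abs, sq_abs]
  ring

private lemma reflH_eq_comp {N : ℕ} [NeZero N] (l : ℝ) :
    reflH (N := N) l = (fun z => (EuclideanSpace.single 0 (2 * l) : EuclideanSpace ℝ (Fin N)) + z)
      ∘ (LinearIsometryEquiv.piLpCongrRight 2
        (fun i : Fin N => if i = 0 then LinearIsometryEquiv.neg ℝ else
          LinearIsometryEquiv.refl ℝ ℝ)) := by
  funext w
  ext i
  rcases eq_or_ne i 0 with h | h
  · subst h
    simp [reflH, LinearIsometryEquiv.piLpCongrRight_apply, EuclideanSpace.single_apply]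
    ring
  · simp [reflH, Function.update_of_ne h, LinearIsometryEquiv.piLpCongrRight_apply,
      EuclideanSpace.single_apply, h]

private lemma reflH_measurePreserving {N : ℕ} [NeZero N] (l : ℝ) :
    MeasurePreserving (reflH (N := N) l) volume volume := by
  rw [reflH_eq_comp]
  exact (measurePreserving_add_left volume _).comp
    (LinearIsometryEquiv.piLpCongrRight 2
      (fun i : Fin N => if i = 0 then LinearIsometryEquiv.neg ℝ else
        LinearIsometryEquiv.refl ℝ ℝ)).measurePreserving

private lemma reflH_continuous {N : ℕ} [NeZero N] (l : ℝ) :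
    Continuous (reflH (N := N) l) := by
  rw [reflH_eq_comp]
  exact (continuous_const.add continuous_id).comp (LinearIsometryEquiv.continuous _)

set_option maxHeartbeats 1000000 in
/-- For `α > N`, `diam Ω < e^(1/(N−α))`: if `Ω_λ` contains a ball `B` of positive radius
and `|x_λ − y| ≥ δ > 0` on `B`, then the difference quotient of the logarithmic Riesz
potential satisfies `(u(x_λ) − u(x))/(2(λ − x₁)) ≤ −C` for a constant `C > 0` independent
of `x`. -/
theorem log_riesz_difference_quotient_bound {N : ℕ} [NeZero N]
    (Ω : Set (EuclideanSpace ℝ (Fin N))) (hΩo : IsOpen Ω) (hΩb : Bornology.IsBounded Ω)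
    (α : ℝ) (hα : (N : ℝ) < α) (hdiam : Metric.diam Ω < Real.exp (1 / ((N : ℝ) - α)))
    (l : ℝ) (hrefl : reflH l '' sigmaL Ω l ⊆ Ω)
    (c : EuclideanSpace ℝ (Fin N)) (r : ℝ) (hr : 0 < r)
    (hB : Metric.ball c r ⊆ omegaL Ω l) (δ : ℝ) (hδ : 0 < δ) :
    ∃ C > 0, ∀ x ∈ Ω, x 0 < l →
      (∀ y ∈ Metric.ball c r, δ ≤ ‖reflH l x - y‖) →
      ((∫ y in Ω, ‖reflH l x - y‖ ^ (α - N) * Real.log (1 / ‖reflH l x - y‖))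
          - ∫ y in Ω, ‖x - y‖ ^ (α - N) * Real.log (1 / ‖x - y‖)) / (2 * (l - x 0))
        ≤ -C := by
  classical
  have hβ : 0 < α - (N : ℝ) := sub_pos.2 hα
  set D := Metric.diam Ω with hDdef
  have hD1 : D < Real.exp (-(1 / (α - (N : ℝ)))) := by
    have hexp : (1 : ℝ) / ((N : ℝ) - α) = -(1 / (α - (N : ℝ))) := by
      rw [show (N : ℝ) - α = -(α - (N : ℝ)) by ring, one_div, inv_neg, one_div]
    rw [← hexp]; exact hdiam
  -- basic geometry
  have hΩm : MeasurableSet Ω := hΩo.measurableSet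
  have hBΩ : Metric.ball c r ⊆ Ω := fun y hy => (hB hy).1
  have hcΩ : c ∈ Ω := hBΩ (Metric.mem_ball_self hr)
  have hnorm_e : ‖(EuclideanSpace.single 0 (1:ℝ) : EuclideanSpace ℝ (Fin N))‖ = 1 := by
    rw [EuclideanSpace.norm_single, norm_one]
  have hc'mem : c + (r / 2) • (EuclideanSpace.single 0 (1:ℝ)) ∈ Metric.ball c r := by
    rw [Metric.mem_ball, dist_eq_norm, add_sub_cancel_left, norm_smul, Real.norm_eq_abs,
      abs_of_pos (by positivity), hnorm_e, mul_one]
    linarith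
  have hDpos : (0 : ℝ) < D := by
    have h1 : dist (c + (r / 2) • (EuclideanSpace.single 0 (1:ℝ))) c ≤ D :=
      Metric.dist_le_diam_of_mem hΩb (hBΩ hc'mem) hcΩ
    rw [dist_eq_norm, add_sub_cancel_left, norm_smul, Real.norm_eq_abs,
      abs_of_pos (by positivity : (0:ℝ) < r / 2), hnorm_e, mul_one] at h1
    linarith
  obtain ⟨m, hm, hmono⟩ := incr_lemma hβ hD1 hδ
  set B' := Metric.ball c (r / 2) with hB'def
  set v := (volume B').toReal with hvdef
  have hv : 0 < v := by
    rw [hvdef]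
    exact ENNReal.toReal_pos (Metric.measure_ball_pos volume c (by positivity)).ne'
      measure_ball_lt_top.ne
  have hC : 0 < m * r * v / (2 * D) := div_pos (mul_pos (mul_pos hm hr) hv) (by linarith)
  refine ⟨m * r * v / (2 * D), hC, ?_⟩
  intro x hxΩ hxl hxd
  set z := reflH l x with hzdef
  set S : Set (EuclideanSpace ℝ (Fin N)) := sigmaL Ω l with hSdef
  set S' : Set (EuclideanSpace ℝ (Fin N)) := reflH l '' S with hS'def
  set T : Set (EuclideanSpace ℝ (Fin N)) := S ∪ S' with hTdef
  set R : Set (EuclideanSpace ℝ (Fin N)) := Ω \ T with hRdef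
  have hxS : x ∈ S := ⟨hxΩ, hxl⟩
  have hzS' : z ∈ S' := Set.mem_image_of_mem _ hxS
  have hzΩ : z ∈ Ω := hrefl hzS'
  have hp : 0 < l - x 0 := sub_pos.2 hxl
  -- measurability of T
  have hev : Continuous fun w : EuclideanSpace ℝ (Fin N) => w 0 := PiLp.continuous_apply 2 _ 0
  have hSm : MeasurableSet S :=
    hΩm.inter ((hev.measurable) measurableSet_Iio)
  have hS'm : MeasurableSet S' := by
    have hS'eq : S' = reflH l ⁻¹' S := by
      ext w
      constructor
      · rintro ⟨u, hu, rfl⟩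
        simpa [Set.mem_preimage, reflH_reflH l u] using hu
      · intro hw
        exact ⟨reflH l w, hw, reflH_reflH l w⟩
    rw [hS'eq]
    exact hSm.preimage (reflH_continuous l).measurable
  have hTm : MeasurableSet T := hSm.union hS'm
  have hRm : MeasurableSet R := hΩm.diff hTm
  have hTsub : T ⊆ Ω := Set.union_subset (fun y hy => hy.1) hrefl
  have hunion : T ∪ R = Ω := Set.union_diff_cancel hTsub
  -- preimage invariance
  have hcomp2 : reflH (N := N) l ∘ reflH l = id := funext (reflH_reflH l)
  have hS'eq : S' = reflH l ⁻¹' S := by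
    ext w
    constructor
    · rintro ⟨u, hu, rfl⟩
      simpa [Set.mem_preimage, reflH_reflH l u] using hu
    · intro hw
      exact ⟨reflH l w, hw, reflH_reflH l w⟩
  have hTpre : reflH l ⁻¹' T = T := by
    have h1 : reflH l ⁻¹' S' = S := by
      rw [hS'eq, ← Set.preimage_comp, hcomp2, Set.preimage_id]
    rw [hTdef, Set.preimage_union, ← hS'eq, h1, Set.union_comm]
  -- measurable embedding
  have hemb : MeasurableEmbedding (reflH (N := N) l) := by
    exact (Homeomorph.mk ⟨reflH l, reflH l, reflH_reflH l, reflH_reflH l⟩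
      (reflH_continuous l) (reflH_continuous l)).measurableEmbedding
  -- integrability
  have hIz : IntegrableOn (fun y => ‖z - y‖ ^ (α - (N:ℝ)) * Real.log (1 / ‖z - y‖)) Ω :=
    kernel_integrableOn hΩb hβ z
  have hIx : IntegrableOn (fun y => ‖x - y‖ ^ (α - (N:ℝ)) * Real.log (1 / ‖x - y‖)) Ω :=
    kernel_integrableOn hΩb hβ x
  -- symmetry on T
  have hsym : (∫ y in T, ‖z - y‖ ^ (α - (N:ℝ)) * Real.log (1 / ‖z - y‖))
      = ∫ y in T, ‖x - y‖ ^ (α - (N:ℝ)) * Real.log (1 / ‖x - y‖) := by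
    have step1 := integral_indicator (μ := volume) (f := fun y : EuclideanSpace ℝ (Fin N) =>
      ‖z - y‖ ^ (α - (N:ℝ)) * Real.log (1 / ‖z - y‖)) hTm
    have step2 := (reflH_measurePreserving (N := N) l).integral_comp hemb
      (T.indicator (fun y => ‖z - y‖ ^ (α - (N:ℝ)) * Real.log (1 / ‖z - y‖)))
    have step3 : (fun w => T.indicator
          (fun y => ‖z - y‖ ^ (α - (N:ℝ)) * Real.log (1 / ‖z - y‖)) (reflH l w))
        = T.indicator (fun y => ‖x - y‖ ^ (α - (N:ℝ)) * Real.log (1 / ‖x - y‖)) := by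
      funext w
      by_cases hw : w ∈ T
      · have hw' : reflH l w ∈ T := by
          rw [← Set.mem_preimage, hTpre]; exact hw
        rw [Set.indicator_of_mem hw', Set.indicator_of_mem hw, hzdef, reflH_norm_sub]
      · have hw' : reflH l w ∉ T := fun h => hw (by rwa [← hTpre, Set.mem_preimage])
        rw [Set.indicator_of_notMem hw', Set.indicator_of_notMem hw]
    rw [← integral_indicator hTm, ← integral_indicator hTm, ← step2, step3]
  -- splitting
  have hsplit : ∀ F : EuclideanSpace ℝ (Fin N) → ℝ, IntegrableOn F Ω volume →
      ∫ y in Ω, F y = (∫ y in T, F y) + ∫ y in R, F y := by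
    intro F hF
    rw [← hunion]
    exact setIntegral_union disjoint_sdiff_self_right hRm (hF.mono_set hTsub)
      (hF.mono_set Set.diff_subset)
  have hdiff : ((∫ y in Ω, ‖z - y‖ ^ (α - (N:ℝ)) * Real.log (1 / ‖z - y‖))
        - ∫ y in Ω, ‖x - y‖ ^ (α - (N:ℝ)) * Real.log (1 / ‖x - y‖))
      = ∫ y in R, (‖z - y‖ ^ (α - (N:ℝ)) * Real.log (1 / ‖z - y‖)
        - ‖x - y‖ ^ (α - (N:ℝ)) * Real.log (1 / ‖x - y‖)) := by
    rw [hsplit _ hIz, hsplit _ hIx, hsym,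
      integral_sub (hIz.mono_set Set.diff_subset) (hIx.mono_set Set.diff_subset)]
    ring
  -- pointwise bounds on R
  have hRub : ∀ y ∈ R, ‖z - y‖ ^ (α - (N:ℝ)) * Real.log (1 / ‖z - y‖)
      - ‖x - y‖ ^ (α - (N:ℝ)) * Real.log (1 / ‖x - y‖) ≤ 0 := by
    intro y hy
    have hyΩ : y ∈ Ω := hy.1
    have hq : 0 ≤ y 0 - l := by
      by_contra hlt
      exact hy.2 (Or.inl ⟨hyΩ, by linarith [not_le.1 hlt]⟩)
    have hne : z - y ≠ 0 := sub_ne_zero.2 (fun hzy => hy.2 (hzy ▸ Or.inr hzS'))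
    have hs2pos : (0:ℝ) < ‖z - y‖ := norm_pos_iff.2 hne
    have hsq : ‖x - y‖ ^ 2 - ‖z - y‖ ^ 2 = 4 * (l - x 0) * (y 0 - l) := by
      rw [hzdef]; exact reflH_sq_identity l x y
    have hs2s1 : ‖z - y‖ ≤ ‖x - y‖ := by
      nlinarith [norm_nonneg (z - y), norm_nonneg (x - y), hp, hq]
    have hs1D : ‖x - y‖ ≤ D := by
      rw [← dist_eq_norm]; exact Metric.dist_le_diam_of_mem hΩb hxΩ hyΩ
    obtain ⟨m', hm', hmono'⟩ := incr_lemma hβ hD1 hs2pos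
    have h1 := hmono' ‖z - y‖ ‖x - y‖ le_rfl hs2s1 hs1D
    nlinarith [mul_nonneg hm'.le (sub_nonneg.2 hs2s1)]
  -- pointwise bound on B'
  have homega : ∀ w ∈ omegaL Ω l, l ≤ w 0 := by
    intro w hw
    by_contra hlt
    exact hw.2 (subset_closure (Or.inl ⟨hw.1, not_le.1 hlt⟩))
  have hB'R : B' ⊆ R := by
    intro y hy
    have h1 := hB (Metric.ball_subset_ball (by linarith) hy)
    exact ⟨h1.1, fun hT => h1.2 (subset_closure hT)⟩
  have hB'bound : ∀ y ∈ B', ‖z - y‖ ^ (α - (N:ℝ)) * Real.log (1 / ‖z - y‖)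
      - ‖x - y‖ ^ (α - (N:ℝ)) * Real.log (1 / ‖x - y‖)
      ≤ -(m * (l - x 0) * r / D) := by
    intro y hy
    have hyΩ : y ∈ Ω := (hB (Metric.ball_subset_ball (by linarith) hy)).1
    have hq : r / 2 ≤ y 0 - l := by
      have hw : y - (r / 2) • (EuclideanSpace.single 0 (1:ℝ)) ∈ Metric.ball c r := by
        rw [Metric.mem_ball]
        have hdy : dist y c < r / 2 := Metric.mem_ball.1 hy
        calc dist (y - (r / 2) • (EuclideanSpace.single 0 (1:ℝ))) c
            = ‖(y - c) - (r / 2) • (EuclideanSpace.single 0 (1:ℝ))‖ := by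
              rw [dist_eq_norm]; congr 1; abel
          _ ≤ ‖y - c‖ + ‖(r / 2) • (EuclideanSpace.single 0 (1:ℝ))‖ := norm_sub_le _ _
          _ < r := by
              rw [norm_smul, Real.norm_eq_abs, abs_of_pos (by positivity : (0:ℝ) < r / 2),
                hnorm_e, mul_one]
              rw [← dist_eq_norm]
              linarith
      have h2 := homega _ (hB hw)
      have h3 : ((y - (r / 2) • (EuclideanSpace.single 0 (1:ℝ)) : EuclideanSpace ℝ (Fin N))) 0
          = y 0 - r / 2 := by
        rw [PiLp.sub_apply, PiLp.smul_apply, EuclideanSpace.single_apply]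
        simp
      rw [h3] at h2
      linarith
    have hs2δ : δ ≤ ‖z - y‖ := by
      rw [hzdef]
      exact hxd y (Metric.ball_subset_ball (by linarith) hy)
    have hsq : ‖x - y‖ ^ 2 - ‖z - y‖ ^ 2 = 4 * (l - x 0) * (y 0 - l) := by
      rw [hzdef]; exact reflH_sq_identity l x y
    have hs2s1 : ‖z - y‖ ≤ ‖x - y‖ := by
      nlinarith [norm_nonneg (z - y), norm_nonneg (x - y), hp, hq, hr]
    have hs1D : ‖x - y‖ ≤ D := by
      rw [← dist_eq_norm]; exact Metric.dist_le_diam_of_mem hΩb hxΩ hyΩ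
    have hs2D : ‖z - y‖ ≤ D := by
      rw [← dist_eq_norm]; exact Metric.dist_le_diam_of_mem hΩb hzΩ hyΩ
    have hgap : (l - x 0) * r / D ≤ ‖x - y‖ - ‖z - y‖ := by
      rw [div_le_iff₀ hDpos]
      nlinarith [sub_nonneg.2 hs2s1, hp, hq, hr, hsq, hs1D, hs2D]
    have h1 := hmono ‖z - y‖ ‖x - y‖ hs2δ hs2s1 hs1D
    have h2 : m * ((l - x 0) * r / D) ≤ m * (‖x - y‖ - ‖z - y‖) :=
      mul_le_mul_of_nonneg_left hgap hm.le
    have h3 : m * ((l - x 0) * r / D) = m * (l - x 0) * r / D := by ring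
    linarith
  -- integral comparison
  have hIR : IntegrableOn (fun y => ‖z - y‖ ^ (α - (N:ℝ)) * Real.log (1 / ‖z - y‖)
      - ‖x - y‖ ^ (α - (N:ℝ)) * Real.log (1 / ‖x - y‖)) R :=
    (hIz.mono_set Set.diff_subset).sub (hIx.mono_set Set.diff_subset)
  have step1 : (∫ y in R, (‖z - y‖ ^ (α - (N:ℝ)) * Real.log (1 / ‖z - y‖)
        - ‖x - y‖ ^ (α - (N:ℝ)) * Real.log (1 / ‖x - y‖)))
      ≤ ∫ y in B', (‖z - y‖ ^ (α - (N:ℝ)) * Real.log (1 / ‖z - y‖)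
        - ‖x - y‖ ^ (α - (N:ℝ)) * Real.log (1 / ‖x - y‖)) := by
    have hneg : (∫ y in B', -(‖z - y‖ ^ (α - (N:ℝ)) * Real.log (1 / ‖z - y‖)
          - ‖x - y‖ ^ (α - (N:ℝ)) * Real.log (1 / ‖x - y‖)))
        ≤ ∫ y in R, -(‖z - y‖ ^ (α - (N:ℝ)) * Real.log (1 / ‖z - y‖)
          - ‖x - y‖ ^ (α - (N:ℝ)) * Real.log (1 / ‖x - y‖)) := by
      refine setIntegral_mono_set hIR.neg ?_ (HasSubset.Subset.eventuallyLE hB'R)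
      filter_upwards [ae_restrict_mem hRm] with y hy
      simp only [Pi.zero_apply, Pi.neg_apply]
      linarith [hRub y hy]
    rw [integral_neg, integral_neg] at hneg
    linarith
  have step2 : (∫ y in B', (‖z - y‖ ^ (α - (N:ℝ)) * Real.log (1 / ‖z - y‖)
        - ‖x - y‖ ^ (α - (N:ℝ)) * Real.log (1 / ‖x - y‖)))
      ≤ ∫ _ in B', -(m * (l - x 0) * r / D) := by
    refine setIntegral_mono_on (hIR.mono_set hB'R) ?_ measurableSet_ball hB'bound
    exact integrableOn_const measure_ball_lt_top.ne
  have step3 : (∫ _ in B', -(m * (l - x 0) * r / D) : ℝ) = v * -(m * (l - x 0) * r / D) := by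
    rw [setIntegral_const, smul_eq_mul]
    rfl
  -- conclusion
  have htotal : ((∫ y in Ω, ‖z - y‖ ^ (α - (N:ℝ)) * Real.log (1 / ‖z - y‖))
        - ∫ y in Ω, ‖x - y‖ ^ (α - (N:ℝ)) * Real.log (1 / ‖x - y‖))
      ≤ v * -(m * (l - x 0) * r / D) := by
    rw [hdiff, ← step3]
    exact step1.trans step2
  have h2p : (0:ℝ) < 2 * (l - x 0) := by linarith
  have hfin := (div_le_div_iff_of_pos_right h2p).2 htotal
  have hpne : l - x 0 ≠ 0 := hp.ne'
  have hDne : D ≠ 0 := hDpos.ne'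
  have heq : (v * -(m * (l - x 0) * r / D)) / (2 * (l - x 0)) = -(m * r * v / (2 * D)) := by
    field_simp
  rw [← heq]
  exact hfin
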